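/- arXiv:2004.01450 — 6 statements merged into one kernel-verified Lean document; each statement's English description precedes it below -/
import Mathlib

section
/- For every n ≥ 4 the map η_n : S_n → Aut(V^n) is a group homomorphism, i.e. η_n(π'π) = η_n(π') ∘ η_n(π) for all π, π' ∈ S_n. -/
open Equiv

/-- XOR on `Fin 4` (the Klein group structure on vertices of a tetrahedron). -/
def xor4 (a b : Fin 4) : Fin 4 :=
  ⟨(a.val ^^^ b.val) % 4, Nat.mod_lt _ (by norm_num)⟩

/-- The underlying function of the cross-ratio homomorphism `φ : S₄ → S₃`:
a permutation of the vertices `{0,1,2,3}` of a tetrahedron induces a permutation of the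
three partitions of the vertex set into two pairs of opposite edges; the partition pairing
`0` with `j+1` is indexed by `j : Fin 3`. -/
def phiFun (π : Perm (Fin 4)) (j : Fin 3) : Fin 3 :=
  ⟨(xor4 (π 0) (π ⟨j.val + 1, by omega⟩)).val - 1, by
    have h := (xor4 (π 0) (π ⟨j.val + 1, by omega⟩)).isLt
    omega⟩

lemma phiFun_leftInv : ∀ (π : Perm (Fin 4)) (j : Fin 3), phiFun π⁻¹ (phiFun π j) = j := by
  decide

/-- The cross-ratio homomorphism `φ : S₄ → S₃`. -/
def phi (π : Perm (Fin 4)) : Perm (Fin 3) where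
  toFun := phiFun π
  invFun := phiFun π⁻¹
  left_inv := phiFun_leftInv π
  right_inv := fun j => by simpa using phiFun_leftInv π⁻¹ j

/-- Restriction of a permutation `π` to a bijection between the complement of `{i}`
and the complement of `{π i}`. -/
def restrictPerm {k : ℕ} (π : Perm (Fin k)) (i : Fin k) :
    {x : Fin k // x ≠ i} ≃ {x : Fin k // x ≠ π i} where
  toFun x := ⟨π x.1, fun h => x.2 (π.injective h)⟩
  invFun y := ⟨π.symm y.1, fun h => y.2 (by simpa using congrArg π h)⟩
  left_inv x := Subtype.ext (π.symm_apply_apply x.1)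
  right_inv y := Subtype.ext (π.apply_symm_apply y.1)

/-- The induced permutation `π_i ∈ S_k` of `π ∈ S_{k+1}`: the restriction of `π` to the
complement of `{i}`, reindexed via the order preserving identifications with `Fin k`. -/
def inducedPerm {k : ℕ} (π : Perm (Fin (k + 1))) (i : Fin (k + 1)) : Perm (Fin k) :=
  ((finSuccAboveEquiv i).trans ((restrictPerm π i).trans (finSuccAboveEquiv (π i)).symm))

/-- The spaces `V^n` of the paper, reindexed: `Vs k` models `V^{k+4}`.
`V^4 = ℝ³` and `V^{n+1} = ℝ^{n+1} ⊗ V^n`, a tensor being viewed as an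
`(n+1)`-tuple of rows lying in `V^n`. -/
def Vs : ℕ → Type
  | 0 => Fin 3 → ℝ
  | (k + 1) => Fin (k + 5) → Vs k

/-- The canonical action `η_n` of `S_n` on `V^n` (with `n = k + 4`):
`η₄(π)(e_j) = sign(π) e_{φ(π) j}` and `η_{n+1}(π)(e_i ⊗ u) = e_{π(i)} ⊗ η_n(π_i)(u)`. -/
noncomputable def eta : (k : ℕ) → Equiv.Perm (Fin (k + 4)) → Vs k → Vs k
  | 0 => fun π v j => ((Equiv.Perm.sign π : ℤ) : ℝ) * v ((phi π)⁻¹ j)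
  | (k + 1) => fun π v i => eta k (inducedPerm π (π⁻¹ i)) (v (π⁻¹ i))

lemma phi_mul_inv : ∀ (π π' : Perm (Fin 4)) (j : Fin 3),
    (phi (π' * π))⁻¹ j = (phi π)⁻¹ ((phi π')⁻¹ j) := by
  decide

lemma inducedPerm_mul {k : ℕ} (π π' : Perm (Fin (k + 1))) (i : Fin (k + 1)) :
    inducedPerm (π' * π) i = inducedPerm π' (π i) * inducedPerm π i := by
  ext x
  simp [inducedPerm, restrictPerm, Perm.mul_apply]

theorem eta_mul (k : ℕ) (π π' : Equiv.Perm (Fin (k + 4))) :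
    eta k (π' * π) = (eta k π') ∘ (eta k π) := by
  induction k with
  | zero =>
    funext v j
    simp only [eta, Function.comp_apply]
    rw [phi_mul_inv]
    push_cast [map_mul]
    show _ = ((Perm.sign π' : ℤ) : ℝ) * (((Perm.sign π : ℤ) : ℝ) * v ((phi π)⁻¹ ((phi π')⁻¹ j)))
    ring
  | succ k ih =>
    funext v i
    simp only [eta, Function.comp_apply]
    have h1 : (π' * π)⁻¹ i = π⁻¹ (π'⁻¹ i) := by simp [Perm.mul_apply]
    rw [h1]
    have h2 : inducedPerm (π' * π) (π⁻¹ (π'⁻¹ i)) =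
        inducedPerm π' (π'⁻¹ i) * inducedPerm π (π⁻¹ (π'⁻¹ i)) := by
      have := inducedPerm_mul π π' (π⁻¹ (π'⁻¹ i))
      simpa using this
    rw [h2, ih]
    rfl
end

section
/- For every n ≥ 5 the canonical representation η_n : S_n → Aut(V^n) is injective: if η_n(π) = id then π = id. -/
open Equiv

/-- The zero element of `Vs k`. -/
def zeroV : (k : ℕ) → Vs k
  | 0 => fun _ => 0
  | (k + 1) => fun _ => zeroV k

/-- The all-ones element of `Vs k`. -/
def oneV : (k : ℕ) → Vs k
  | 0 => fun _ => 1
  | (k + 1) => fun _ => oneV k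

lemma eta_oneV_ne (k : ℕ) : ∀ σ : Equiv.Perm (Fin (k + 4)),
    eta k σ (oneV k) ≠ zeroV k := by
  induction k with
  | zero =>
    intro σ h
    have h0 := congrFun h 0
    simp only [eta, oneV, zeroV, mul_one] at h0
    have := Int.units_eq_one_or (Equiv.Perm.sign σ)
    rcases this with h1 | h1 <;> rw [h1] at h0 <;> norm_num at h0
  | succ k ih =>
    intro σ h
    have h0 := congrFun h 0
    simp only [eta, oneV, zeroV] at h0
    exact ih _ h0

/-- For every `n ≥ 5` (here `n = k + 5`) the canonical representation `η_n` is injective. -/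
theorem eta_injective (k : ℕ) (π : Equiv.Perm (Fin (k + 5)))
    (h : eta (k + 1) π = id) : π = 1 := by
  ext i
  by_contra hne
  set v : Vs (k + 1) := fun j => if j = i then oneV k else zeroV k with hv
  have h1 : eta (k + 1) π v = v := by rw [h]; rfl
  have h2 := congrFun h1 (π i)
  simp only [eta, Equiv.Perm.inv_def, Equiv.symm_apply_apply, hv] at h2
  rw [if_pos trivial, if_neg (fun he => hne (by simp [he]))] at h2
  exact eta_oneV_ne k _ h2
end

section
/- The subspace L_5 ⊂ V^5, consisting of those 5×3 real matrices each of whose rows (a_i, b_i, c_i) satisfies a_i + b_i + c_i = 0, is invariant under the canonical representation η_5 of S_5 on V^5. -/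
open Equiv

/-- `η₄ : S₄ → Aut(V⁴)`, `V⁴ = ℝ³`: the signed cross-ratio representation,
`η₄(π)(e_j) = sign(π) e_{φ(π) j}`. -/
noncomputable def eta4fun (π : Equiv.Perm (Fin 4)) (v : Fin 3 → ℝ) : Fin 3 → ℝ :=
  fun j => ((Equiv.Perm.sign π : ℤ) : ℝ) * v ((phi π)⁻¹ j)

/-- The canonical representation `η₅ : S₅ → Aut(V⁵)` on the space `V⁵` of `5 × 3`
real matrices: `η₅(π)(e_i ⊗ u) = e_{π(i)} ⊗ η₄(π_i)(u)`. -/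
noncomputable def eta5fun (π : Equiv.Perm (Fin 5)) (v : Fin 5 → Fin 3 → ℝ) :
    Fin 5 → Fin 3 → ℝ :=
  fun i => eta4fun (inducedPerm π (π⁻¹ i)) (v (π⁻¹ i))

/-- `η₅(π)` as a linear endomorphism of `V⁵`. -/
noncomputable def eta5lin (π : Equiv.Perm (Fin 5)) :
    (Fin 5 → Fin 3 → ℝ) →ₗ[ℝ] (Fin 5 → Fin 3 → ℝ) where
  toFun := eta5fun π
  map_add' := by
    intro v w; funext i j; simp [eta5fun, eta4fun, mul_add]
  map_smul' := by
    intro c v; funext i j; simp [eta5fun, eta4fun, smul_eq_mul]; ring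

/-- The subspace `L₅ ⊂ V⁵` of matrices whose rows sum to zero. -/
def L5set : Set (Fin 5 → Fin 3 → ℝ) := {v | ∀ i, v i 0 + v i 1 + v i 2 = 0}

lemma sum3 (s : Perm (Fin 3)) (f : Fin 3 → ℝ) :
    f (s 0) + f (s 1) + f (s 2) = f 0 + f 1 + f 2 := by
  have h := Equiv.sum_comp s f
  simpa [Fin.sum_univ_three, add_assoc] using h


/-- `L₅` is invariant under the canonical representation `η₅`. -/
theorem L5set_invariant (π : Equiv.Perm (Fin 5)) (v : Fin 5 → Fin 3 → ℝ)
    (hv : v ∈ L5set) : eta5fun π v ∈ L5set := by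
  intro i
  simp only [eta5fun, eta4fun]
  rw [← mul_add, ← mul_add, sum3, hv (π⁻¹ i), mul_zero]
end

section
/- Let ψ(π) = Tr(η_5(π)) be the character of the canonical representation η_5 of S_5 on V^5. Then ψ takes the following values on the conjugacy classes of S_5: ψ = 15 on the identity (class 1⁵), ψ = −3 on transpositions (class 21³), ψ = 3 on products of two disjoint transpositions (class 2²1), ψ = 0 on 3-cycles (class 31²), ψ = 0 on products of a 3-cycle and a disjoint transposition (class 32), ψ = −1 on 4-cycles (class 41), and ψ = 0 on 5-cycles (class 5). -/
open Equiv

/-- The character `ψ` of the canonical representation `η₅`. -/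
noncomputable def psi (π : Equiv.Perm (Fin 5)) : ℝ :=
  LinearMap.trace ℝ (Fin 5 → Fin 3 → ℝ) (eta5lin π)

def psiZ (π : Perm (Fin 5)) : ℤ :=
  ∑ i : Fin 5, ∑ j : Fin 3,
    if π⁻¹ i = i ∧ (phi (inducedPerm π (π⁻¹ i)))⁻¹ j = j
    then (Equiv.Perm.sign (inducedPerm π (π⁻¹ i)) : ℤ) else 0

set_option maxRecDepth 100000 in
set_option maxHeartbeats 2000000 in
lemma key : ∀ π : Perm (Fin 5),
    (π.support.card = 0 → psiZ π = 15) ∧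
    (π.support.card = 2 → psiZ π = -3) ∧
    (π.support.card = 4 ∧ Equiv.Perm.sign π = 1 → psiZ π = 3) ∧
    (π.support.card = 3 → psiZ π = 0) ∧
    (π.support.card = 5 ∧ Equiv.Perm.sign π = -1 → psiZ π = 0) ∧
    (π.support.card = 4 ∧ Equiv.Perm.sign π = -1 → psiZ π = -1) ∧
    (π.support.card = 5 ∧ Equiv.Perm.sign π = 1 → psiZ π = 0) := by decide

lemma psi_eq (π : Perm (Fin 5)) : psi π = ((psiZ π : ℤ) : ℝ) := by
  classical
  rw [psi, LinearMap.trace_eq_matrix_trace ℝ (Pi.basis fun _ : Fin 5 => Pi.basisFun ℝ (Fin 3))]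
  rw [Matrix.trace]
  rw [psiZ]
  push_cast
  rw [Finset.sum_sigma']
  refine Finset.sum_congr Finset.univ_sigma_univ.symm fun k _ => ?_
  obtain ⟨i, j⟩ := k
  rw [Matrix.diag_apply, LinearMap.toMatrix_apply, Pi.basis_repr, Pi.basisFun_repr]
  simp only [Pi.basis_apply, Pi.basisFun_apply]
  rcases eq_or_ne (π⁻¹ i) i with h | h
  · rw [h]
    by_cases hj : (phi (inducedPerm π i))⁻¹ j = j <;>
      simp [eta5lin, eta5fun, eta4fun, h, hj, Pi.single_apply]
  · simp [eta5lin, eta5fun, eta4fun, h, show π.symm i ≠ i from h, Pi.single_apply]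

lemma card_of_ct {m : Multiset ℕ} (π : Perm (Fin 5)) (h : π.cycleType = m) :
    π.support.card = m.sum := by rw [← Equiv.Perm.sum_cycleType, h]

lemma sign_of_ct {m : Multiset ℕ} (π : Perm (Fin 5)) (h : π.cycleType = m) :
    Equiv.Perm.sign π = (-1) ^ (m.sum + m.card) := by
  rw [Equiv.Perm.sign_of_cycleType, h]

/-- The values of the character `ψ = Tr ∘ η₅` on the conjugacy classes of `S₅`
(conjugacy classes are identified by cycle types). -/
theorem psi_values (π : Equiv.Perm (Fin 5)) :
    (π = 1 → psi π = 15) ∧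
    (π.cycleType = {2} → psi π = -3) ∧
    (π.cycleType = {2, 2} → psi π = 3) ∧
    (π.cycleType = {3} → psi π = 0) ∧
    (π.cycleType = {2, 3} → psi π = 0) ∧
    (π.cycleType = {4} → psi π = -1) ∧
    (π.cycleType = {5} → psi π = 0) := by
  have k := key π
  refine ⟨fun h => ?_, fun h => ?_, fun h => ?_, fun h => ?_, fun h => ?_, fun h => ?_,
    fun h => ?_⟩ <;> rw [psi_eq]
  · rw [k.1 (by simp [h])]; norm_num
  · rw [k.2.1 (by simpa using card_of_ct π h)]; norm_num
  · rw [k.2.2.1 ⟨by simpa using card_of_ct π h, by rw [sign_of_ct π h]; decide⟩]; norm_num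
  · rw [k.2.2.2.1 (by simpa using card_of_ct π h)]; norm_num
  · rw [k.2.2.2.2.1 ⟨by simpa using card_of_ct π h, by rw [sign_of_ct π h]; decide⟩]; norm_num
  · rw [k.2.2.2.2.2.1 ⟨by simpa using card_of_ct π h, by rw [sign_of_ct π h]; decide⟩]; norm_num
  · rw [k.2.2.2.2.2.2 ⟨by simpa using card_of_ct π h, by rw [sign_of_ct π h]; decide⟩]; norm_num
end

section
/- Let w ∈ V^5 be the 5×3 matrix whose i-th row is (1,1,1) for i = 1,3,5 and (−1,−1,−1) for i = 2,4 (i.e. w = e_1 − e_2 + e_3 − e_4 + e_5, where e_i has i-th row (1,1,1) and zero remaining rows). Then η_5(π)(w) = sign(π) · w for every π ∈ S_5; in particular the line spanned by w is an η_5-invariant subspace, orthogonal to L_5, on which η_5 acts by the sign representation of S_5. -/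
open Equiv

/-- The vector `w = e₁ − e₂ + e₃ − e₄ + e₅ ∈ V⁵`, whose `i`-th row is `(1,1,1)` for odd
`i` and `(−1,−1,−1)` for even `i` (in the paper's 1-based indexing). -/
def wvec : Fin 5 → Fin 3 → ℝ := fun i _ => (-1 : ℝ) ^ (i : ℕ)


set_option maxRecDepth 10000 in
lemma induced_sign_key : ∀ (π : Perm (Fin 5)) (i : Fin 5),
    (Equiv.Perm.sign (inducedPerm π i) * (-1) ^ (i.val) : ℤˣ) =
      Equiv.Perm.sign π * (-1) ^ ((π i).val) := by
  decide

lemma eta5_wvec (π : Equiv.Perm (Fin 5)) :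
    eta5fun π wvec = fun i j => ((Equiv.Perm.sign π : ℤ) : ℝ) * wvec i j := by
  funext i j
  have h := induced_sign_key π (π⁻¹ i)
  have h2 := congrArg (fun u : ℤˣ => ((u : ℤ) : ℝ)) h
  simp only [Equiv.Perm.coe_inv, Equiv.apply_symm_apply, Units.val_mul, Units.val_pow_eq_pow_val,
    Units.val_neg, Units.val_one, Int.cast_mul, Int.cast_pow, Int.cast_neg,
    Int.cast_one] at h2
  simpa [eta5fun, eta4fun, wvec] using h2

/-- `η₅(π)(w) = sign(π)·w` for every `π ∈ S₅`; in particular the line spanned by `w` is an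
`η₅`-invariant subspace, orthogonal to `L₅`, on which `η₅` acts by the sign representation. -/
theorem wvec_sign_representation :
    (∀ π : Equiv.Perm (Fin 5),
      eta5fun π wvec = fun i j => ((Equiv.Perm.sign π : ℤ) : ℝ) * wvec i j) ∧
    (∀ v ∈ L5set, ∑ i, ∑ j, wvec i j * v i j = 0) ∧
    (∀ π : Equiv.Perm (Fin 5), ∀ v ∈ Submodule.span ℝ ({wvec} : Set (Fin 5 → Fin 3 → ℝ)),
      eta5fun π v ∈ Submodule.span ℝ ({wvec} : Set (Fin 5 → Fin 3 → ℝ))) := by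
  refine ⟨eta5_wvec, ?_, ?_⟩
  · intro v hv
    simp only [Fin.sum_univ_five, Fin.sum_univ_three, wvec]
    norm_num [show ((3:Fin 5):ℕ)=3 from rfl, show ((4:Fin 5):ℕ)=4 from rfl]
    linarith [hv 0, hv 1, hv 2, hv 3, hv 4]
  · intro π v hv
    rw [Submodule.mem_span_singleton] at hv ⊢
    obtain ⟨c, rfl⟩ := hv
    refine ⟨c * ((Equiv.Perm.sign π : ℤ) : ℝ), ?_⟩
    have hs : eta5fun π (c • wvec) = c • eta5fun π wvec := (eta5lin π).map_smul c wvec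
    rw [hs, eta5_wvec π]
    funext i j
    simp only [Pi.smul_apply, smul_eq_mul, wvec]
    ring
end

section
/- For every edge λ = {p, q} ⊂ {1,2,3,4,5}, the transposition π_λ ∈ S_5 exchanging p and q satisfies π_λ · r_λ = − r_λ, where the action on functionals is (π·f)(x) = f(η_5(π)^{-1} x). -/
open Equiv

/-- Coefficient matrices of the ten characteristic functionals `r_λ`, `λ` an edge of
`{1,…,5}` (0-indexed: rows `1,…,5` become `0,…,4`, columns `(a,b,c)` become `(0,1,2)`).
`rc p q` is the coefficient matrix of `r_{(p+1)(q+1)}` for `p < q`, and `0` otherwise. -/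
def rc : Fin 5 → Fin 5 → Fin 5 → Fin 3 → ℝ :=
  -- r₁₂ = −a₃+a₄−a₅, r₁₃ = −a₂−b₄+b₅, r₁₄ = b₂−b₃−c₅, r₁₅ = −c₂+c₃−c₄,
  -- r₂₃ = −a₁+c₄−c₅, r₂₄ = b₁+c₃+b₅, r₂₅ = −c₁−b₃+b₄,
  -- r₃₄ = −c₁+c₂−a₅, r₃₅ = b₁−b₂−a₄, r₄₅ = −a₁+a₂−a₃
  ![![0,
     ![![0,0,0], ![0,0,0], ![-1,0,0], ![1,0,0], ![-1,0,0]],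
     ![![0,0,0], ![-1,0,0], ![0,0,0], ![0,-1,0], ![0,1,0]],
     ![![0,0,0], ![0,1,0], ![0,-1,0], ![0,0,0], ![0,0,-1]],
     ![![0,0,0], ![0,0,-1], ![0,0,1], ![0,0,-1], ![0,0,0]]],
    ![0, 0,
     ![![-1,0,0], ![0,0,0], ![0,0,0], ![0,0,1], ![0,0,-1]],
     ![![0,1,0], ![0,0,0], ![0,0,1], ![0,0,0], ![0,1,0]],
     ![![0,0,-1], ![0,0,0], ![0,-1,0], ![0,1,0], ![0,0,0]]],
    ![0, 0, 0,
     ![![0,0,-1], ![0,0,1], ![0,0,0], ![0,0,0], ![-1,0,0]],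
     ![![0,1,0], ![0,-1,0], ![0,0,0], ![-1,0,0], ![0,0,0]]],
    ![0, 0, 0, 0,
     ![![-1,0,0], ![1,0,0], ![-1,0,0], ![0,0,0], ![0,0,0]]],
    ![0, 0, 0, 0, 0]]

/-- The characteristic functional `r_λ : V⁵ → ℝ` for the edge `λ = {p,q}`, `p < q`. -/
def rfun (p q : Fin 5) (v : Fin 5 → Fin 3 → ℝ) : ℝ :=
  ∑ i, ∑ j, rc p q i j * v i j

/-- The action of `S₅` on functions `f : V⁵ → ℝ` induced by `η₅`:
`(π·f)(x) = f(η₅(π)⁻¹ x)`. -/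
noncomputable def permAct (π : Equiv.Perm (Fin 5)) (f : (Fin 5 → Fin 3 → ℝ) → ℝ) :
    (Fin 5 → Fin 3 → ℝ) → ℝ :=
  fun v => f (eta5fun π⁻¹ v)

def swapTab : Fin 5 → Fin 5 → Fin 5 → Fin 5 :=
  ![![![0, 1, 2, 3, 4], ![1, 0, 2, 3, 4], ![2, 1, 0, 3, 4], ![3, 1, 2, 0, 4], ![4, 1, 2, 3, 0]], ![![1, 0, 2, 3, 4], ![0, 1, 2, 3, 4], ![0, 2, 1, 3, 4], ![0, 3, 2, 1, 4], ![0, 4, 2, 3, 1]], ![![2, 1, 0, 3, 4], ![0, 2, 1, 3, 4], ![0, 1, 2, 3, 4], ![0, 1, 3, 2, 4], ![0, 1, 4, 3, 2]], ![![3, 1, 2, 0, 4], ![0, 3, 2, 1, 4], ![0, 1, 3, 2, 4], ![0, 1, 2, 3, 4], ![0, 1, 2, 4, 3]], ![![4, 1, 2, 3, 0], ![0, 4, 2, 3, 1], ![0, 1, 4, 3, 2], ![0, 1, 2, 4, 3], ![0, 1, 2, 3, 4]]]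

def signTab : Fin 5 → Fin 5 → Fin 5 → ℤ :=
  ![![![1, 1, 1, 1, 1], ![1, 1, -1, -1, -1], ![-1, -1, -1, -1, -1], ![1, -1, -1, 1, -1], ![-1, -1, -1, -1, -1]], ![![1, 1, -1, -1, -1], ![1, 1, 1, 1, 1], ![-1, 1, 1, -1, -1], ![-1, -1, -1, -1, -1], ![-1, 1, -1, -1, 1]], ![![-1, -1, -1, -1, -1], ![-1, 1, 1, -1, -1], ![1, 1, 1, 1, 1], ![-1, -1, 1, 1, -1], ![-1, -1, -1, -1, -1]], ![![1, -1, -1, 1, -1], ![-1, -1, -1, -1, -1], ![-1, -1, 1, 1, -1], ![1, 1, 1, 1, 1], ![-1, -1, -1, 1, 1]], ![![-1, -1, -1, -1, -1], ![-1, 1, -1, -1, 1], ![-1, -1, -1, -1, -1], ![-1, -1, -1, 1, 1], ![1, 1, 1, 1, 1]]]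

def phiTab : Fin 5 → Fin 5 → Fin 5 → Fin 3 → Fin 3 :=
  ![![![![0, 1, 2], ![0, 1, 2], ![0, 1, 2], ![0, 1, 2], ![0, 1, 2]], ![![0, 1, 2], ![0, 1, 2], ![0, 2, 1], ![0, 2, 1], ![0, 2, 1]], ![![0, 2, 1], ![0, 2, 1], ![0, 2, 1], ![2, 1, 0], ![2, 1, 0]], ![![2, 0, 1], ![2, 1, 0], ![2, 1, 0], ![1, 2, 0], ![1, 0, 2]], ![![2, 1, 0], ![1, 0, 2], ![1, 0, 2], ![1, 0, 2], ![2, 1, 0]]], ![![![0, 1, 2], ![0, 1, 2], ![0, 2, 1], ![0, 2, 1], ![0, 2, 1]], ![![0, 1, 2], ![0, 1, 2], ![0, 1, 2], ![0, 1, 2], ![0, 1, 2]], ![![0, 2, 1], ![0, 1, 2], ![0, 1, 2], ![1, 0, 2], ![1, 0, 2]], ![![2, 1, 0], ![1, 0, 2], ![1, 0, 2], ![1, 0, 2], ![2, 1, 0]], ![![1, 0, 2], ![1, 2, 0], ![2, 1, 0], ![2, 1, 0], ![2, 0, 1]]], ![![![0, 2, 1], ![0, 2, 1], ![0, 2, 1],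 ![2, 1, 0], ![2, 1, 0]], ![![0, 2, 1], ![0, 1, 2], ![0, 1, 2], ![1, 0, 2], ![1, 0, 2]], ![![0, 1, 2], ![0, 1, 2], ![0, 1, 2], ![0, 1, 2], ![0, 1, 2]], ![![1, 0, 2], ![1, 0, 2], ![0, 1, 2], ![0, 1, 2], ![0, 2, 1]], ![![2, 1, 0], ![2, 1, 0], ![0, 2, 1], ![0, 2, 1], ![0, 2, 1]]], ![![![2, 0, 1], ![2, 1, 0], ![2, 1, 0], ![1, 2, 0], ![1, 0, 2]], ![![2, 1, 0], ![1, 0, 2], ![1, 0, 2], ![1, 0, 2], ![2, 1, 0]], ![![1, 0, 2], ![1, 0, 2], ![0, 1, 2], ![0, 1, 2], ![0, 2, 1]], ![![0, 1, 2], ![0, 1, 2], ![0, 1, 2], ![0, 1, 2], ![0, 1, 2]], ![![0, 2, 1], ![0, 2, 1], ![0, 2, 1], ![0, 1, 2], ![0, 1, 2]]], ![![![2, 1, 0], ![1, 0, 2], ![1, 0, 2], ![1, 0, 2], ![2, 1, 0]], ![![1, 0, 2], ![1, 2, 0], ![2, 1, 0], ![2, 1, 0], ![2, 0, 1]], ![![2,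 1, 0], ![2, 1, 0], ![0, 2, 1], ![0, 2, 1], ![0, 2, 1]], ![![0, 2, 1], ![0, 2, 1], ![0, 2, 1], ![0, 1, 2], ![0, 1, 2]], ![![0, 1, 2], ![0, 1, 2], ![0, 1, 2], ![0, 1, 2], ![0, 1, 2]]]]

lemma swapTab_eq : ∀ p q i : Fin 5, (Equiv.swap p q) i = swapTab p q i := by decide

lemma signTab_eq : ∀ p q i : Fin 5,
    ((Equiv.Perm.sign (inducedPerm (Equiv.swap p q) ((Equiv.swap p q) i)) : ℤˣ) : ℤ)
      = signTab p q i := by decide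

lemma phiTab_eq : ∀ (p q i : Fin 5) (j : Fin 3),
    (phi (inducedPerm (Equiv.swap p q) ((Equiv.swap p q) i)))⁻¹ j = phiTab p q i j := by decide

/-- For every edge `λ = {p,q}`, the transposition `π_λ` exchanging the vertices of `λ`
changes the sign of the characteristic functional: `π_λ · r_λ = −r_λ`. -/
theorem transposition_negates_characteristic (p q : Fin 5) (h : p < q) :
    permAct (Equiv.swap p q) (rfun p q) = fun v => -(rfun p q v) := by
  fin_cases p <;> fin_cases q <;> first
  | exact absurd h (by decide)
  | (funext v
     simp only [permAct, rfun, eta5fun, eta4fun, Equiv.swap_inv, Fin.sum_univ_five,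
       Fin.sum_univ_three]
     simp only [signTab_eq, phiTab_eq]
     simp only [swapTab_eq]
     norm_num [swapTab, signTab, phiTab, rc, Matrix.cons_val_two, Matrix.cons_val_three, Matrix.cons_val_four, Matrix.vecHead, Matrix.vecTail]
     ring)
end
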